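/- For every δ ∈ (0,1), every k ∈ {1,…,n−2} and every ε ∈ (0,1): the derivative with respect to ε of D1(ε;k+1) + D2(ε;k+1) is strictly greater than the derivative with respect to ε of D1(ε;k) + D2(ε;k). -/

import Mathlib

open Finset

lemma pow_pred_helper (c : ℕ) (x : ℝ) (hx : x ≠ 0) :
    (c : ℝ) * x ^ (c - 1) = (c : ℝ) * x ^ c / x := by
  cases c with
  | zero => simp
  | succ c => rw [Nat.add_sub_cancel, pow_succ]; field_simp

lemma hasDerivAt_invPow (a b : ℕ) (ε : ℝ) (h0 : ε ≠ 0) (h1 : (1:ℝ) - ε ≠ 0) :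
    HasDerivAt (fun x : ℝ => (x ^ a)⁻¹ * ((1 - x) ^ b)⁻¹)
      ((ε ^ a)⁻¹ * ((1 - ε) ^ b)⁻¹ * ((b : ℝ) / (1 - ε) - (a : ℝ) / ε)) ε := by
  have ha : HasDerivAt (fun x : ℝ => (x ^ a)⁻¹)
      (-((a : ℝ) * ε ^ (a - 1)) / (ε ^ a) ^ 2) ε :=
    (hasDerivAt_pow a ε).inv (pow_ne_zero _ h0)
  have hin : HasDerivAt (fun x : ℝ => (1 - x) ^ b)
      ((b : ℝ) * (1 - ε) ^ (b - 1) * (-1)) ε := by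
    have h := (hasDerivAt_pow b (1 - ε)).comp ε (((hasDerivAt_const ε (1:ℝ)).sub (hasDerivAt_id ε)))
    simpa [Function.comp_def] using h
  have hb : HasDerivAt (fun x : ℝ => ((1 - x) ^ b)⁻¹)
      (-((b : ℝ) * (1 - ε) ^ (b - 1) * (-1)) / ((1 - ε) ^ b) ^ 2) ε :=
    hin.inv (pow_ne_zero _ h1)
  have := ha.mul hb
  refine this.congr_deriv ?_
  rw [pow_pred_helper a ε h0, pow_pred_helper b (1 - ε) h1]
  field_simp
  ring

lemma hasDerivAt_powInv (q b : ℕ) (ε : ℝ) (h0 : ε ≠ 0) (h1 : (1:ℝ) - ε ≠ 0) :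
    HasDerivAt (fun x : ℝ => x ^ q * ((1 - x) ^ b)⁻¹)
      (ε ^ q * ((1 - ε) ^ b)⁻¹ * ((q : ℝ) / ε + (b : ℝ) / (1 - ε))) ε := by
  have ha : HasDerivAt (fun x : ℝ => x ^ q) ((q : ℝ) * ε ^ (q - 1)) ε := hasDerivAt_pow q ε
  have hin : HasDerivAt (fun x : ℝ => (1 - x) ^ b)
      ((b : ℝ) * (1 - ε) ^ (b - 1) * (-1)) ε :=
by
    have h := (hasDerivAt_pow b (1 - ε)).comp ε (((hasDerivAt_const ε (1:ℝ)).sub (hasDerivAt_id ε)))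
    simpa [Function.comp_def] using h
  have hb : HasDerivAt (fun x : ℝ => ((1 - x) ^ b)⁻¹)
      (-((b : ℝ) * (1 - ε) ^ (b - 1) * (-1)) / ((1 - ε) ^ b) ^ 2) ε :=
    hin.inv (pow_ne_zero _ h1)
  have := ha.mul hb
  refine this.congr_deriv ?_
  rw [pow_pred_helper q ε h0, pow_pred_helper b (1 - ε) h1]
  field_simp

/-- `D1(ε;k) = ((1−δ)/C(n−1,n−k−1))·ε^{−(n−k−1)}·(1−ε)^{−(k+1)}`. -/
noncomputable def D1 (n k : ℕ) (δ ε : ℝ) : ℝ :=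
  ((1 - δ) / ((n - 1).choose (n - k - 1) : ℝ)) * (ε ^ (n - k - 1))⁻¹ *
    ((1 - ε) ^ (k + 1))⁻¹

/-- `D2(ε;k) = δ·Σ_{q=0}^{k} (C(n−1,n−k−1+q)/C(n−1,n−k−1))·ε^q·(1−ε)^{−(q+1)}`. -/
noncomputable def D2 (n k : ℕ) (δ ε : ℝ) : ℝ :=
  δ * ∑ q ∈ range (k + 1),
    (((n - 1).choose (n - k - 1 + q) : ℝ) / ((n - 1).choose (n - k - 1) : ℝ)) *
      ε ^ q * ((1 - ε) ^ (q + 1))⁻¹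

/-- For every `δ ∈ (0,1)`, every `k ∈ {1,…,n−2}` and every `ε ∈ (0,1)`:
the derivative of `ε ↦ D1(ε;k+1) + D2(ε;k+1)` is strictly greater than the
derivative of `ε ↦ D1(ε;k) + D2(ε;k)`. -/
noncomputable def Ederiv (n k : ℕ) (δ ε : ℝ) : ℝ :=
  ((1 - δ) / ((n - 1).choose (n - k - 1) : ℝ)) *
      ((ε ^ (n - k - 1))⁻¹ * ((1 - ε) ^ (k + 1))⁻¹ *
        (((k : ℝ) + 1) / (1 - ε) - ((n - k - 1 : ℕ) : ℝ) / ε)) +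
    δ * ∑ q ∈ range (k + 1),
      (((n - 1).choose (n - k - 1 + q) : ℝ) / ((n - 1).choose (n - k - 1) : ℝ)) *
        (ε ^ q * ((1 - ε) ^ (q + 1))⁻¹ * ((q : ℝ) / ε + ((q : ℝ) + 1) / (1 - ε)))

lemma hasDerivAt_D (n k : ℕ) (δ ε : ℝ) (h0 : ε ≠ 0) (h1 : (1:ℝ) - ε ≠ 0) :
    HasDerivAt (fun x => D1 n k δ x + D2 n k δ x) (Ederiv n k δ ε) ε := by
  have hD1 : HasDerivAt (fun x => D1 n k δ x)
      (((1 - δ) / ((n - 1).choose (n - k - 1) : ℝ)) *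
        ((ε ^ (n - k - 1))⁻¹ * ((1 - ε) ^ (k + 1))⁻¹ *
          (((k : ℝ) + 1) / (1 - ε) - ((n - k - 1 : ℕ) : ℝ) / ε))) ε := by
    have h := (hasDerivAt_invPow (n - k - 1) (k + 1) ε h0 h1).const_mul
      ((1 - δ) / ((n - 1).choose (n - k - 1) : ℝ))
    unfold D1
    convert h using 2 with x
    · rfl
    · rfl
    · ring
    · push_cast; ring
  have hD2 : HasDerivAt (fun x => D2 n k δ x)
      (δ * ∑ q ∈ range (k + 1),
        (((n - 1).choose (n - k - 1 + q) : ℝ) / ((n - 1).choose (n - k - 1) : ℝ)) *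
          (ε ^ q * ((1 - ε) ^ (q + 1))⁻¹ * ((q : ℝ) / ε + ((q : ℝ) + 1) / (1 - ε)))) ε := by
    have hsum : HasDerivAt (fun x => ∑ q ∈ range (k + 1),
        (((n - 1).choose (n - k - 1 + q) : ℝ) / ((n - 1).choose (n - k - 1) : ℝ)) *
          x ^ q * ((1 - x) ^ (q + 1))⁻¹)
        (∑ q ∈ range (k + 1),
          (((n - 1).choose (n - k - 1 + q) : ℝ) / ((n - 1).choose (n - k - 1) : ℝ)) *
            (ε ^ q * ((1 - ε) ^ (q + 1))⁻¹ * ((q : ℝ) / ε + ((q : ℝ) + 1) / (1 - ε)))) ε := by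
      apply HasDerivAt.fun_sum
      intro q _
      have h := (hasDerivAt_powInv q (q + 1) ε h0 h1).const_mul
        (((n - 1).choose (n - k - 1 + q) : ℝ) / ((n - 1).choose (n - k - 1) : ℝ))
      convert h using 2 with x
      · rfl
      · ring
      · push_cast; ring
    have h := hsum.const_mul δ
    unfold D2
    exact h
  exact (hD1.add hD2).congr_deriv rfl
lemma choose_cross_ineq (m i q : ℕ) :
    m.choose (i + 1 + q) * m.choose i ≤ m.choose (i + q) * m.choose (i + 1) := by
  have h1 : m.choose (i + 1) * (i + 1) = m.choose i * (m - i) := Nat.choose_succ_right_eq m i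
  have h2 : m.choose (i + q + 1) * (i + q + 1) = m.choose (i + q) * (m - (i + q)) :=
    Nat.choose_succ_right_eq m (i + q)
  have key : (m - (i + q)) * (i + 1) ≤ (i + q + 1) * (m - i) := by
    calc (m - (i + q)) * (i + 1) ≤ (m - i) * (i + q + 1) :=
          Nat.mul_le_mul (Nat.sub_le_sub_left (Nat.le_add_right i q) m) (by omega)
      _ = (i + q + 1) * (m - i) := Nat.mul_comm _ _
  have h3 : i + 1 + q = i + q + 1 := by omega
  rw [h3]
  apply Nat.le_of_mul_le_mul_right (c := (i + q + 1) * (i + 1)) _ (by positivity)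
  calc m.choose (i + q + 1) * m.choose i * ((i + q + 1) * (i + 1))
      = (m.choose (i + q + 1) * (i + q + 1)) * (m.choose i * (i + 1)) := by ring
    _ = (m.choose (i + q) * (m - (i + q))) * (m.choose i * (i + 1)) := by rw [h2]
    _ = (m.choose i * ((m - (i + q)) * (i + 1))) * m.choose (i + q) := by ring
    _ ≤ (m.choose i * ((i + q + 1) * (m - i))) * m.choose (i + q) := by
        exact Nat.mul_le_mul (Nat.mul_le_mul_left _ key) (Nat.le_refl _)
    _ = (m.choose i * (m - i)) * m.choose (i + q) * (i + q + 1) := by ring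
    _ = (m.choose (i + 1) * (i + 1)) * m.choose (i + q) * (i + q + 1) := by rw [h1]
    _ = m.choose (i + q) * m.choose (i + 1) * ((i + q + 1) * (i + 1)) := by ring
theorem deriv_D1_add_D2_strict_order (n : ℕ) (hn : 3 ≤ n)
    (δ : ℝ) (hδ0 : 0 < δ) (hδ1 : δ < 1)
    (k : ℕ) (hk1 : 1 ≤ k) (hk2 : k ≤ n - 2)
    (ε : ℝ) (hε0 : 0 < ε) (hε1 : ε < 1) :
    deriv (fun x => D1 n (k + 1) δ x + D2 n (k + 1) δ x) ε >
      deriv (fun x => D1 n k δ x + D2 n k δ x) ε := by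
  have h0 : ε ≠ 0 := ne_of_gt hε0
  have hv : (0:ℝ) < 1 - ε := by linarith
  have h1 : (1:ℝ) - ε ≠ 0 := ne_of_gt hv
  rw [(hasDerivAt_D n (k+1) δ ε h0 h1).deriv, (hasDerivAt_D n k δ ε h0 h1).deriv]
  obtain ⟨d, hnd⟩ : ∃ d, n = k + d + 2 := ⟨n - k - 2, by omega⟩
  unfold Ederiv
  have e1 : n - (k + 1) - 1 = d := by omega
  have e2 : n - k - 1 = d + 1 := by omega
  rw [e1, e2]
  simp only [show k + 1 + 1 = k + 2 from rfl]
  set m := n - 1 with hm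
  have hmval : m = k + d + 1 := by omega
  -- basic positivity
  have hcd : (0:ℝ) < (m.choose d : ℝ) := by
    exact_mod_cast Nat.choose_pos (by omega)
  have hcd1 : (0:ℝ) < (m.choose (d+1) : ℝ) := by
    exact_mod_cast Nat.choose_pos (by omega)
  have hrel : (m.choose (d+1) : ℝ) * ((d:ℝ)+1) = (m.choose d : ℝ) * ((k:ℝ)+1) := by
    have h := Nat.choose_succ_right_eq m d
    have hsub : m - d = k + 1 := by omega
    rw [hsub] at h
    exact_mod_cast h
  have hd1 : ((d:ℝ)+1) ≠ 0 := by positivity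
  have hcd1eq : (m.choose (d+1) : ℝ) = (m.choose d : ℝ) * ((k:ℝ)+1) / ((d:ℝ)+1) := by
    field_simp
    linarith [hrel]
  -- extend the k-sum to range (k+2) using vanishing top binomial
  have hz : (m.choose (d + 1 + (k + 1)) : ℝ) = 0 := by
    have : m < d + 1 + (k + 1) := by omega
    simp [Nat.choose_eq_zero_of_lt this]
  have hsum_ext :
      (∑ q ∈ range (k + 1),
        ((m.choose (d + 1 + q) : ℝ) / (m.choose (d+1) : ℝ)) *
          (ε ^ q * ((1 - ε) ^ (q + 1))⁻¹ * ((q : ℝ) / ε + ((q : ℝ) + 1) / (1 - ε))))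
      = (∑ q ∈ range (k + 2),
        ((m.choose (d + 1 + q) : ℝ) / (m.choose (d+1) : ℝ)) *
          (ε ^ q * ((1 - ε) ^ (q + 1))⁻¹ * ((q : ℝ) / ε + ((q : ℝ) + 1) / (1 - ε)))) := by
    conv_rhs => rw [Finset.sum_range_succ]
    rw [hz]
    simp
  rw [hsum_ext, gt_iff_lt, ← sub_pos]
  -- the strictly positive (1-δ) part
  have hG : 0 <
      (ε ^ d)⁻¹ * ((1 - ε) ^ (k + 2))⁻¹ * (((k:ℝ) + 2) / (1 - ε) - (d:ℝ) / ε)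
          / (m.choose d : ℝ)
        - (ε ^ (d+1))⁻¹ * ((1 - ε) ^ (k + 1))⁻¹ * (((k:ℝ) + 1) / (1 - ε) - ((d:ℝ) + 1) / ε)
          / (m.choose (d+1) : ℝ) := by
    rw [sub_pos, div_lt_div_iff₀ hcd1 hcd]
    rw [← sub_pos, hcd1eq]
    have key :
        (ε ^ d)⁻¹ * ((1 - ε) ^ (k + 2))⁻¹ * (((k:ℝ) + 2) / (1 - ε) - (d:ℝ) / ε)
            * ((m.choose d : ℝ) * ((k:ℝ)+1) / ((d:ℝ)+1))
          - (ε ^ (d+1))⁻¹ * ((1 - ε) ^ (k + 1))⁻¹ *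
              (((k:ℝ) + 1) / (1 - ε) - ((d:ℝ) + 1) / ε) * (m.choose d : ℝ)
        = (m.choose d : ℝ) * ((((k:ℝ)+1) * ε - ((d:ℝ)+1) * (1 - ε))^2 + ((k:ℝ)+1) * ε)
            / (ε ^ (d+2) * (1 - ε) ^ (k + 3) * ((d:ℝ)+1)) := by
      rw [eq_div_iff (show (ε ^ (d+2) * (1 - ε) ^ (k + 3) * ((d:ℝ)+1)) ≠ 0 by positivity)]
      field_simp
      ring
    rw [key]
    apply div_pos _ (by positivity)
    apply mul_pos hcd
    nlinarith [sq_nonneg (((k:ℝ)+1) * ε - ((d:ℝ)+1) * (1 - ε)), hε0]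
  -- the nonnegative δ part
  have hS : 0 ≤ ∑ q ∈ range (k + 2),
      (((m.choose (d + q) : ℝ) / (m.choose d : ℝ))
        - ((m.choose (d + 1 + q) : ℝ) / (m.choose (d+1) : ℝ))) *
        (ε ^ q * ((1 - ε) ^ (q + 1))⁻¹ * ((q : ℝ) / ε + ((q : ℝ) + 1) / (1 - ε))) := by
    apply Finset.sum_nonneg
    intro q _
    apply mul_nonneg
    · rw [sub_nonneg, div_le_div_iff₀ hcd1 hcd]
      exact_mod_cast choose_cross_ineq m d q
    · have : (0:ℝ) ≤ (q : ℝ) / ε + ((q : ℝ) + 1) / (1 - ε) := by positivity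
      positivity
  -- combine
  have hδ' : (0:ℝ) < 1 - δ := by linarith
  have hcomb :
      (∑ q ∈ range (k + 2),
        ((m.choose (d + q) : ℝ) / (m.choose d : ℝ)) *
          (ε ^ q * ((1 - ε) ^ (q + 1))⁻¹ * ((q : ℝ) / ε + ((q : ℝ) + 1) / (1 - ε))))
      - (∑ q ∈ range (k + 2),
        ((m.choose (d + 1 + q) : ℝ) / (m.choose (d+1) : ℝ)) *
          (ε ^ q * ((1 - ε) ^ (q + 1))⁻¹ * ((q : ℝ) / ε + ((q : ℝ) + 1) / (1 - ε))))
      = ∑ q ∈ range (k + 2),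
          (((m.choose (d + q) : ℝ) / (m.choose d : ℝ))
            - ((m.choose (d + 1 + q) : ℝ) / (m.choose (d+1) : ℝ))) *
            (ε ^ q * ((1 - ε) ^ (q + 1))⁻¹ * ((q : ℝ) / ε + ((q : ℝ) + 1) / (1 - ε))) := by
    rw [← Finset.sum_sub_distrib]
    apply Finset.sum_congr rfl
    intro q _
    ring
  have hA :
      (1 - δ) / (m.choose d : ℝ) *
          ((ε ^ d)⁻¹ * ((1 - ε) ^ (k + 2))⁻¹ * ((((k+1 : ℕ) : ℝ) + 1) / (1 - ε) - (d:ℝ) / ε))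
        - (1 - δ) / (m.choose (d+1) : ℝ) *
          ((ε ^ (d+1))⁻¹ * ((1 - ε) ^ (k + 1))⁻¹ * (((k:ℝ) + 1) / (1 - ε) - (((d+1 : ℕ)):ℝ) / ε))
      = (1 - δ) *
          ((ε ^ d)⁻¹ * ((1 - ε) ^ (k + 2))⁻¹ * (((k:ℝ) + 2) / (1 - ε) - (d:ℝ) / ε)
              / (m.choose d : ℝ)
            - (ε ^ (d+1))⁻¹ * ((1 - ε) ^ (k + 1))⁻¹ * (((k:ℝ) + 1) / (1 - ε) - ((d:ℝ) + 1) / ε)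
              / (m.choose (d+1) : ℝ)) := by
    push_cast
    ring
  have hdS : 0 ≤ δ *
      ((∑ q ∈ range (k + 2),
        ((m.choose (d + q) : ℝ) / (m.choose d : ℝ)) *
          (ε ^ q * ((1 - ε) ^ (q + 1))⁻¹ * ((q : ℝ) / ε + ((q : ℝ) + 1) / (1 - ε))))
      - (∑ q ∈ range (k + 2),
        ((m.choose (d + 1 + q) : ℝ) / (m.choose (d+1) : ℝ)) *
          (ε ^ q * ((1 - ε) ^ (q + 1))⁻¹ * ((q : ℝ) / ε + ((q : ℝ) + 1) / (1 - ε))))) := by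
    apply mul_nonneg hδ0.le
    rw [hcomb]
    exact hS
  have hAG := mul_pos hδ' hG
  rw [← hA] at hAG
  linarith [hAG, hdS]
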